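/- Let G = (V,E) be a finite simple graph, let 0 ≤ α ≤ 1, and let O ⊆ V with |O| = k. Let w ∈ O and y ∈ V∖O with d(y) ≥ d(w), and set O' := (O∖{w}) ∪ {y}. Then cov_α(O') ≥ cov_α(O) − 2k. -/

import Mathlib

open Finset

/-- Number of edges of `G` with both endpoints in `X`. -/
noncomputable def mIn {V : Type*} (G : SimpleGraph V) (X : Finset V) : ℕ :=
  {e ∈ G.edgeSet | ∀ v ∈ e, v ∈ X}.ncard

/-- Number of edges of `G` with one endpoint in `X` and the other in `Y`. -/
noncomputable def mBtw {V : Type*} (G : SimpleGraph V) (X Y : Finset V) : ℕ :=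
  {e ∈ G.edgeSet | ∃ u ∈ X, ∃ w ∈ Y, e = s(u, w)}.ncard

/-- `cov_α(S) = (1-α)·m(S) + α·m(S, V∖S)`. -/
noncomputable def cov {V : Type*} [Fintype V] [DecidableEq V] (G : SimpleGraph V) (α : ℝ)
    (S : Finset V) : ℝ :=
  (1 - α) * mIn G S + α * mBtw G S Sᶜ

section Aux

open scoped Classical

variable {V : Type*} [Fintype V] [DecidableEq V] (G : SimpleGraph V) [DecidableRel G.Adj]

/-- The restriction of `G` to a finset `S` (as a graph on `V`). -/
private def gres (S : Finset V) : SimpleGraph V where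
  Adj u v := G.Adj u v ∧ u ∈ S ∧ v ∈ S
  symm := ⟨fun u v ⟨h, hu, hv⟩ => ⟨h.symm, hv, hu⟩⟩
  loopless := ⟨fun v h => G.loopless.irrefl v h.1⟩

private lemma gres_edgeSet (S : Finset V) :
    (gres G S).edgeSet = {e ∈ G.edgeSet | ∀ v ∈ e, v ∈ S} := by
  ext e
  induction e using Sym2.ind with
  | _ u v =>
    simp only [SimpleGraph.mem_edgeSet, Set.mem_setOf_eq, Sym2.mem_iff, gres]
    constructor
    · rintro ⟨h, hu, hv⟩
      exact ⟨h, fun x hx => by rcases hx with rfl | rfl <;> assumption⟩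
    · rintro ⟨h, hall⟩
      exact ⟨h, hall u (Or.inl rfl), hall v (Or.inr rfl)⟩

private lemma mIn_eq_gres (S : Finset V) : mIn G S = (gres G S).edgeFinset.card := by
  rw [mIn, ← gres_edgeSet, ← SimpleGraph.coe_edgeFinset, Set.ncard_coe_finset]

private lemma gres_degree {S : Finset V} {u : V} (hu : u ∈ S) :
    (gres G S).degree u = (G.neighborFinset u ∩ S).card := by
  unfold SimpleGraph.degree
  congr 1
  ext v
  rw [SimpleGraph.mem_neighborFinset]
  simp only [SimpleGraph.mem_neighborFinset, Finset.mem_inter, gres]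
  tauto

private lemma gres_degree_zero {S : Finset V} {u : V} (hu : u ∉ S) :
    (gres G S).degree u = 0 := by
  unfold SimpleGraph.degree
  rw [Finset.card_eq_zero]
  ext v
  rw [SimpleGraph.mem_neighborFinset]
  simp only [SimpleGraph.mem_neighborFinset, Finset.notMem_empty, iff_false, gres]
  rintro ⟨-, h, -⟩
  exact hu h

private lemma two_mul_mIn (S : Finset V) :
    2 * mIn G S = ∑ u ∈ S, (G.neighborFinset u ∩ S).card := by
  rw [mIn_eq_gres, ← SimpleGraph.sum_degrees_eq_twice_card_edges]
  rw [← Finset.sum_subset (Finset.subset_univ S)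
    (fun x _ hx => gres_degree_zero G hx)]
  exact Finset.sum_congr rfl fun u hu => gres_degree G hu

private lemma mBtw_eq_sum (S : Finset V) :
    mBtw G S Sᶜ = ∑ u ∈ S, (G.neighborFinset u ∩ Sᶜ).card := by
  have hset : {e ∈ G.edgeSet | ∃ u ∈ S, ∃ w ∈ (Sᶜ : Finset V), e = s(u, w)} =
      ↑(((S ×ˢ Sᶜ).filter (fun p => G.Adj p.1 p.2)).image (fun p => s(p.1, p.2))) := by
    ext e
    simp only [Finset.coe_image, Set.mem_image, Finset.mem_coe, Finset.mem_filter,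
      Finset.mem_product, Set.mem_setOf_eq]
    constructor
    · rintro ⟨he, u, hu, v, hv, rfl⟩
      exact ⟨(u, v), ⟨⟨hu, hv⟩, G.mem_edgeSet.mp he⟩, rfl⟩
    · rintro ⟨⟨u, v⟩, ⟨⟨hu, hv⟩, ha⟩, rfl⟩
      exact ⟨G.mem_edgeSet.mpr ha, u, hu, v, hv, rfl⟩
  rw [mBtw, hset, Set.ncard_coe_finset]
  rw [Finset.card_image_of_injOn]
  · rw [Finset.card_filter, Finset.sum_product]
    refine Finset.sum_congr rfl fun u hu => ?_
    rw [← Finset.card_filter]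
    congr 1
    ext v
    simp [SimpleGraph.mem_neighborFinset, and_comm]
  · rintro ⟨u, v⟩ huv ⟨u', v'⟩ huv' h
    simp only [Finset.mem_coe, Finset.mem_filter, Finset.mem_product, Finset.mem_compl] at huv huv'
    rw [Sym2.eq_iff] at h
    rcases h with ⟨rfl, rfl⟩ | ⟨rfl, rfl⟩
    · rfl
    · exact absurd huv.1.1 huv'.1.2

private lemma handshake (S : Finset V) :
    2 * mIn G S + mBtw G S Sᶜ = ∑ u ∈ S, G.degree u := by
  rw [two_mul_mIn, mBtw_eq_sum, ← Finset.sum_add_distrib]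
  refine Finset.sum_congr rfl fun u hu => ?_
  have h1 : G.neighborFinset u ∩ Sᶜ = G.neighborFinset u \ S := by
    ext v; simp [Finset.mem_sdiff]
  rw [h1, Finset.card_inter_add_card_sdiff]
  rfl

private lemma mIn_eq_card (X : Finset V) :
    mIn G X = (G.edgeFinset.filter (fun e => ∀ v ∈ e, v ∈ X)).card := by
  rw [mIn, ← Set.ncard_coe_finset]
  congr 1
  ext e
  simp [SimpleGraph.mem_edgeFinset]

private lemma mIn_mono {X Y : Finset V} (h : X ⊆ Y) : mIn G X ≤ mIn G Y := by
  rw [mIn_eq_card, mIn_eq_card]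
  exact Finset.card_le_card (Finset.monotone_filter_right _
    (fun e _ hv v hve => h (hv v hve)))

private lemma mIn_insert_le (x : V) (A : Finset V) :
    mIn G (insert x A) ≤ mIn G A + A.card := by
  rw [mIn_eq_card, mIn_eq_card]
  set T := G.edgeFinset.filter (fun e => ∀ v ∈ e, v ∈ insert x A) with hT
  set T0 := G.edgeFinset.filter (fun e => ∀ v ∈ e, v ∈ A) with hT0
  have hsub : T0 ⊆ T := Finset.monotone_filter_right _
    (fun e _ hv v hve => Finset.mem_insert_of_mem (hv v hve))
  have hcard : T.card = (T \ T0).card + T0.card :=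
    (Finset.card_sdiff_add_card_eq_card hsub).symm
  have hle : (T \ T0).card ≤ A.card := by
    refine Finset.card_le_card_of_injOn
      (fun e => if h : x ∈ e then Sym2.Mem.other' h else x) ?_ ?_
    · intro e he
      rw [Finset.mem_coe, Finset.mem_sdiff, hT, hT0, Finset.mem_filter, Finset.mem_filter] at he
      obtain ⟨⟨heE, hins⟩, hnot⟩ := he
      have hxe : x ∈ e := by
        by_contra hxe
        exact hnot ⟨heE, fun v hve => by
          rcases Finset.mem_insert.mp (hins v hve) with rfl | h
          · exact absurd hve hxe
          · exact h⟩
      dsimp only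
      rw [dif_pos hxe]
      have hoe : Sym2.Mem.other' hxe ∈ e := Sym2.other_mem' hxe
      rcases Finset.mem_insert.mp (hins _ hoe) with heq | h
      · exfalso
        have : e = s(x, x) := by rw [← Sym2.other_spec' hxe, heq]
        have : G.Adj x x := G.mem_edgeSet.mp (by
          rw [← this]; exact SimpleGraph.mem_edgeFinset.mp heE)
        exact G.loopless.irrefl x this
      · exact h
    · intro e₁ he₁ e₂ he₂ hf
      have h1 : x ∈ e₁ := by
        by_contra hc
        rw [Finset.mem_coe, Finset.mem_sdiff, hT, hT0, Finset.mem_filter,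
          Finset.mem_filter] at he₁
        exact he₁.2 ⟨he₁.1.1, fun v hve => by
          rcases Finset.mem_insert.mp (he₁.1.2 v hve) with rfl | h
          · exact absurd hve hc
          · exact h⟩
      have h2 : x ∈ e₂ := by
        by_contra hc
        rw [Finset.mem_coe, Finset.mem_sdiff, hT, hT0, Finset.mem_filter,
          Finset.mem_filter] at he₂
        exact he₂.2 ⟨he₂.1.1, fun v hve => by
          rcases Finset.mem_insert.mp (he₂.1.2 v hve) with rfl | h
          · exact absurd hve hc
          · exact h⟩
      dsimp only at hf
      rw [dif_pos h1, dif_pos h2] at hf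
      rw [← Sym2.other_spec' h1, ← Sym2.other_spec' h2, hf]
  omega

end Aux

theorem stmt2 {V : Type*} [Fintype V] [DecidableEq V] (G : SimpleGraph V)
    [DecidableRel G.Adj] (α : ℝ) (hα0 : 0 ≤ α) (hα1 : α ≤ 1)
    (k : ℕ) (O : Finset V) (hO : O.card = k)
    (w y : V) (hw : w ∈ O) (hy : y ∉ O) (hd : G.degree w ≤ G.degree y) :
    cov G α (insert y (O.erase w)) ≥ cov G α O - 2 * (k : ℝ) := by
  classical
  set A := O.erase w with hA
  have hwA : w ∉ A := Finset.notMem_erase w O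
  have hyA : y ∉ A := fun h => hy (Finset.mem_of_mem_erase h)
  have hOins : O = insert w A := (Finset.insert_erase hw).symm
  have hk : A.card + 1 = k := by rw [← hO]; exact Finset.card_erase_add_one hw
  have hm1 : mIn G O ≤ mIn G A + A.card := by
    rw [hOins]; exact mIn_insert_le G w A
  have hm2 : mIn G (insert y A) ≤ mIn G A + A.card := mIn_insert_le G y A
  have hm3 : mIn G A ≤ mIn G O :=
    mIn_mono G (by rw [hOins]; exact Finset.subset_insert _ _)
  have hm4 : mIn G A ≤ mIn G (insert y A) := mIn_mono G (Finset.subset_insert _ _)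
  have hs1 : ∑ u ∈ O, G.degree u = G.degree w + ∑ u ∈ A, G.degree u := by
    rw [hOins, Finset.sum_insert hwA]
  have hs2 : ∑ u ∈ insert y A, G.degree u = G.degree y + ∑ u ∈ A, G.degree u :=
    Finset.sum_insert hyA
  have covf : ∀ S : Finset V, cov G α S =
      (1 - 3*α) * mIn G S + α * ∑ u ∈ S, (G.degree u : ℝ) := by
    intro S
    have h := handshake G S
    have h' : (mBtw G S Sᶜ : ℝ) = (∑ u ∈ S, (G.degree u : ℝ)) - 2 * mIn G S := by
      have h2 : ((2 * mIn G S + mBtw G S Sᶜ : ℕ) : ℝ) =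
          ((∑ u ∈ S, G.degree u : ℕ) : ℝ) := congrArg (Nat.cast : ℕ → ℝ) h
      push_cast at h2
      linarith
    rw [cov, h']
    ring
  rw [covf, covf]
  have hs1' : ∑ u ∈ O, ((G.degree u : ℝ)) =
      G.degree w + ∑ u ∈ A, (G.degree u : ℝ) := by exact_mod_cast hs1
  have hs2' : ∑ u ∈ insert y A, ((G.degree u : ℝ)) =
      G.degree y + ∑ u ∈ A, (G.degree u : ℝ) := by exact_mod_cast hs2
  rw [hs1', hs2']
  have hm1' : (mIn G O : ℝ) ≤ (mIn G A : ℝ) + (A.card : ℝ) := by exact_mod_cast hm1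
  have hm2' : (mIn G (insert y A) : ℝ) ≤ (mIn G A : ℝ) + (A.card : ℝ) := by
    exact_mod_cast hm2
  have hm3' : (mIn G A : ℝ) ≤ (mIn G O : ℝ) := by exact_mod_cast hm3
  have hm4' : (mIn G A : ℝ) ≤ (mIn G (insert y A) : ℝ) := by exact_mod_cast hm4
  have hkr : (A.card : ℝ) + 1 = (k : ℝ) := by exact_mod_cast hk
  have hdeg : (G.degree w : ℝ) ≤ (G.degree y : ℝ) := by exact_mod_cast hd
  have hc0 : (0 : ℝ) ≤ (A.card : ℝ) := Nat.cast_nonneg _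
  have key : (1 - 3*α) * ((mIn G (insert y A) : ℝ) - (mIn G O : ℝ)) ≥
      -2 * (A.card : ℝ) := by
    rcases le_or_gt (1 - 3*α) 0 with h | h
    · nlinarith
    · nlinarith
  nlinarith [mul_nonneg hα0 (sub_nonneg.2 hdeg)]
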